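/- For each k ∈ ℤⁿ and x ∈ ℤ, there is a sijection τ from GT(k₁,…,kₙ) to the disjoint union over i = 1,…,n of GT(k₁,…,k_{i−1},x,k_{i+1},…,kₙ), and τ is compatible with the statistics η_{row,1},…,η_{row,n−1} recording the multisets of entries of the top n−1 rows. -/

import Mathlib

/-- `x` lies in the signed half-open interval `[p, q)`. -/
def between (p q x : ℤ) : Prop := (p ≤ x ∧ x < q) ∨ (q ≤ x ∧ x < p)

/-- The sign of `x` as an element of the signed interval `[p, q)`. -/
def isign (p q x : ℤ) : ℤ := if p ≤ x then 1 else -1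

/-- `t` is a (generalized) Gelfand–Tsetlin pattern with `n` rows and bottom row `k`:
row `i` (`0 ≤ i ≤ n−1`) has entries `t i 0, …, t i i`, the bottom row (`i = n−1`) is
`k`, and each entry lies in the signed half-open interval determined by its two lower
neighbours (this is the recursion `GT(k₁,…,kₙ) = ⨆_{l ∈ [k₁,k₂)×⋯×[kₙ₋₁,kₙ)} GT(l)`).
Entries outside the triangle are normalised to `0`. -/
def IsGT (n : ℕ) (k : ℕ → ℤ) (t : ℕ → ℕ → ℤ) : Prop :=
  (∀ j < n, t (n - 1) j = k j) ∧
  (∀ i j, i + 1 < n → j ≤ i → between (t (i+1) j) (t (i+1) (j+1)) (t i j)) ∧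
  (∀ i j, n - 1 < i ∨ i < j → t i j = 0)

/-- The sign of a generalized Gelfand–Tsetlin pattern: the product of the signs of all
its entries in their respective signed intervals. -/
def gtSign (n : ℕ) (t : ℕ → ℕ → ℤ) : ℤ :=
  ∏ i ∈ Finset.range (n - 1), ∏ j ∈ Finset.range (i + 1),
    isign (t (i+1) j) (t (i+1) (j+1)) (t i j)

/-- The positive part of the signed set `GT(k)`. -/
def GTp (n : ℕ) (k : ℕ → ℤ) := {t : ℕ → ℕ → ℤ // IsGT n k t ∧ gtSign n t = 1}

/-- The negative part of the signed set `GT(k)`. -/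
def GTm (n : ℕ) (k : ℕ → ℤ) := {t : ℕ → ℕ → ℤ // IsGT n k t ∧ gtSign n t = -1}

/-- The multiset of entries of the `i`-th row of a pattern. -/
def rowMS (t : ℕ → ℕ → ℤ) (i : ℕ) : Multiset ℤ :=
  (List.ofFn (fun j : Fin (i + 1) => t i j.1) : Multiset ℤ)

/-- `k` with the entry at position `i` replaced by `x`. -/
def rep (k : ℕ → ℤ) (i : ℕ) (x : ℤ) : ℕ → ℤ := fun j => if j = i then x else k j

open Finset
open scoped Classical

noncomputable section GTAux

def chi (p q y : ℤ) : ℤ := (if p ≤ y then (1:ℤ) else 0) - (if q ≤ y then 1 else 0)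

lemma chi_split (a b c y : ℤ) : chi a c y = chi a b y + chi b c y := by
  simp [chi]

lemma chi_swap (a b y : ℤ) : chi b a y = - chi a b y := by
  simp [chi]

lemma chi_eq_isign {a b y : ℤ} (h : between a b y) : chi a b y = isign a b y := by
  rcases h with ⟨h1, h2⟩ | ⟨h1, h2⟩ <;> simp [chi, isign, *] <;> omega

lemma chi_eq_zero {a b y : ℤ} (h : ¬ between a b y) : chi a b y = 0 := by
  unfold between at h; unfold chi
  by_cases h1 : a ≤ y <;> by_cases h2 : b ≤ y <;> simp [*] <;> omega

lemma between_of_chi_ne {a b y : ℤ} (h : chi a b y ≠ 0) : between a b y := by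
  by_contra hc; exact h (chi_eq_zero hc)

lemma abs_le_of_between {a b y : ℤ} (h : between a b y) : |y| ≤ |a| + |b| := by
  have ha := le_abs_self a; have hb := le_abs_self b
  have ha' := neg_abs_le a; have hb' := neg_abs_le b
  rcases h with ⟨h1, h2⟩ | ⟨h1, h2⟩ <;> rw [abs_le] <;> constructor <;> omega

def fnF (m : ℕ) (S : Finset ℤ) : Finset (ℕ → ℤ) :=
  (Fintype.piFinset (fun _ : Fin m => S)).image
    (fun f j => if h : j < m then f ⟨j, h⟩ else 0)

lemma mem_fnF {m : ℕ} {S : Finset ℤ} {l : ℕ → ℤ} :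
    l ∈ fnF m S ↔ (∀ j, j < m → l j ∈ S) ∧ (∀ j, m ≤ j → l j = 0) := by
  constructor
  · rintro hl
    simp only [fnF, mem_image, Fintype.mem_piFinset] at hl
    obtain ⟨f, hf, rfl⟩ := hl
    constructor
    · intro j hj; simp [hj, hf]
    · intro j hj; simp [Nat.not_lt.2 hj]
  · rintro ⟨h1, h2⟩
    simp only [fnF, mem_image, Fintype.mem_piFinset]
    refine ⟨fun j => l j.1, fun j => h1 _ j.2, ?_⟩
    funext j
    by_cases hj : j < m <;> simp [hj]
    exact (h2 j (Nat.le_of_not_lt hj)).symm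

def msOf (m : ℕ) (l : ℕ → ℤ) : Multiset ℤ := (Finset.range m).val.map l

def prof (n : ℕ) (t : ℕ → ℕ → ℤ) : ℕ → Multiset ℤ :=
  fun r => if r + 1 < n then rowMS t r else 0

def W (e : ℕ → ℤ × ℤ) (m : ℕ) (l : ℕ → ℤ) : ℤ :=
  ∏ j ∈ range m, chi (e j).1 (e j).2 (l j)

def ke (k : ℕ → ℤ) : ℕ → ℤ × ℤ := fun j => (k j, k (j+1))

def Bnd (k : ℕ → ℤ) (n : ℕ) : ℤ := ∑ j ∈ range n, |k j|

def Box (k : ℕ → ℤ) (n : ℕ) : Finset ℤ := Finset.Icc (-(Bnd k n)) (Bnd k n)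

def SC : ℕ → (ℕ → ℤ) → (ℕ → Multiset ℤ) → ℤ
  | 0, _, _ => 0
  | 1, _, M => if M = fun _ => 0 then 1 else 0
  | (n+2), k, M =>
      ∑ l ∈ fnF (n+1) (Box k (n+2)),
        W (ke k) (n+1) l *
          (if M n = msOf (n+1) l then SC (n+1) l (Function.update M n 0) else 0)

lemma SC_succ_succ (n : ℕ) (k : ℕ → ℤ) (M : ℕ → Multiset ℤ) :
    SC (n+2) k M = ∑ l ∈ fnF (n+1) (Box k (n+2)),
        W (ke k) (n+1) l *
          (if M n = msOf (n+1) l then SC (n+1) l (Function.update M n 0) else 0) := by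
  rw [SC]



lemma fnF_mono {m : ℕ} {S S' : Finset ℤ} (h : S ⊆ S') : fnF m S ⊆ fnF m S' := by
  intro l hl
  rw [mem_fnF] at hl ⊢
  exact ⟨fun j hj => h (hl.1 j hj), hl.2⟩

lemma pair_abs_le {k : ℕ → ℤ} {n j : ℕ} (hj : j + 1 < n) :
    |k j| + |k (j+1)| ≤ Bnd k n := by
  have hsub : ({j, j+1} : Finset ℕ) ⊆ range n := by
    intro a ha; simp only [mem_insert, mem_singleton] at ha
    rcases ha with rfl | rfl <;> simp [mem_range] <;> omega
  calc |k j| + |k (j+1)| = ∑ a ∈ ({j, j+1} : Finset ℕ), |k a| := by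
        rw [Finset.sum_insert (by simp), Finset.sum_singleton]
    _ ≤ Bnd k n := Finset.sum_le_sum_of_subset_of_nonneg hsub
        (fun a _ _ => abs_nonneg (k a))

lemma W_eq_zero {e : ℕ → ℤ × ℤ} {m : ℕ} {l : ℕ → ℤ} {C : ℤ}
    (hb : ∀ j, j < m → |(e j).1| + |(e j).2| ≤ C)
    (h : ∃ j, j < m ∧ l j ∉ Finset.Icc (-C) C) : W e m l = 0 := by
  obtain ⟨j, hj, hout⟩ := h
  apply Finset.prod_eq_zero (mem_range.2 hj)
  by_contra hne
  have hbet := between_of_chi_ne hne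
  have := abs_le_of_between hbet
  have := hb j hj
  rw [mem_Icc] at hout
  rw [abs_le] at *
  omega

lemma sum_fnF_sup {m : ℕ} {S S' : Finset ℤ} (hS : S ⊆ S') (g : (ℕ → ℤ) → ℤ)
    (h0 : ∀ l ∈ fnF m S', (∃ j, j < m ∧ l j ∉ S) → g l = 0) :
    ∑ l ∈ fnF m S, g l = ∑ l ∈ fnF m S', g l := by
  apply Finset.sum_subset (fnF_mono hS)
  intro l hl' hl
  apply h0 l hl'
  rw [mem_fnF] at hl'
  by_contra hc
  push_neg at hc
  exact hl (mem_fnF.2 ⟨fun j hj => hc j hj, hl'.2⟩)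

-- swap machinery
lemma swap_lt {p m j : ℕ} (hp : p + 1 < m) (hj : j < m) : Equiv.swap p (p+1) j < m := by
  rcases eq_or_ne j p with rfl | h1
  · rw [Equiv.swap_apply_left]; omega
  rcases eq_or_ne j (p+1) with rfl | h2
  · rw [Equiv.swap_apply_right]; omega
  · rw [Equiv.swap_apply_of_ne_of_ne h1 h2]; exact hj

lemma comp_swap_mem_fnF {p m : ℕ} {S : Finset ℤ} {l : ℕ → ℤ} (hp : p + 1 < m)
    (hl : l ∈ fnF m S) : (l ∘ Equiv.swap p (p+1)) ∈ fnF m S := by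
  rw [mem_fnF] at hl ⊢
  refine ⟨fun j hj => hl.1 _ (swap_lt hp hj), fun j hj => ?_⟩
  have h1 : j ≠ p := by omega
  have h2 : j ≠ p + 1 := by omega
  simp only [Function.comp_apply, Equiv.swap_apply_of_ne_of_ne h1 h2]
  exact hl.2 j hj

lemma image_swap_range {p m : ℕ} (hp : p + 1 < m) :
    (range m).image (Equiv.swap p (p+1)) = range m := by
  apply Finset.eq_of_subset_of_card_le
  · intro a ha
    simp only [mem_image, mem_range] at ha ⊢
    obtain ⟨b, hb, rfl⟩ := ha
    exact swap_lt hp hb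
  · rw [Finset.card_image_of_injective _ (Equiv.injective _)]

lemma msOf_comp_swap {m p : ℕ} (hp : p + 1 < m) (l : ℕ → ℤ) :
    msOf m (l ∘ Equiv.swap p (p+1)) = msOf m l := by
  unfold msOf
  have h1 : (range m).val.map (⇑(Equiv.swap p (p+1))) = (range m).val := by
    have := Finset.image_val_of_injOn (f := ⇑(Equiv.swap p (p+1))) (s := range m)
      ((Equiv.injective _).injOn)
    rw [image_swap_range hp] at this
    exact this.symm
  calc (range m).val.map (l ∘ ⇑(Equiv.swap p (p+1)))
      = ((range m).val.map (⇑(Equiv.swap p (p+1)))).map l := by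
        rw [Multiset.map_map]
    _ = (range m).val.map l := by rw [h1]

lemma W_comp_swap {e : ℕ → ℤ × ℤ} {m p : ℕ} (hp : p + 1 < m)
    (hsym : ∀ y y', chi (e p).1 (e p).2 y * chi (e (p+1)).1 (e (p+1)).2 y'
      = chi (e p).1 (e p).2 y' * chi (e (p+1)).1 (e (p+1)).2 y)
    (l : ℕ → ℤ) : W e m (l ∘ Equiv.swap p (p+1)) = W e m l := by
  have hT : ({p, p+1} : Finset ℕ) ⊆ range m := by
    intro a ha; simp only [mem_insert, mem_singleton] at ha
    rcases ha with rfl | rfl <;> simp [mem_range] <;> omega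
  unfold W
  rw [← Finset.prod_sdiff hT, ← Finset.prod_sdiff hT (f := fun j => chi (e j).1 (e j).2 (l j))]
  congr 1
  · apply Finset.prod_congr rfl
    intro j hj
    simp only [mem_sdiff, mem_insert, mem_singleton, not_or] at hj
    rw [Function.comp_apply, Equiv.swap_apply_of_ne_of_ne hj.2.1 hj.2.2]
  · rw [Finset.prod_insert (by simp), Finset.prod_singleton,
        Finset.prod_insert (by simp), Finset.prod_singleton]
    simp only [Function.comp_apply, Equiv.swap_apply_left, Equiv.swap_apply_right]
    exact hsym (l (p+1)) (l p)

lemma sum_cancel {m p : ℕ} (hp : p + 1 < m) (S : Finset ℤ) (g : (ℕ → ℤ) → ℤ)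
    (hg : ∀ l ∈ fnF m S, g (l ∘ Equiv.swap p (p+1)) = - g l) :
    ∑ l ∈ fnF m S, g l = 0 := by
  apply Finset.sum_involution (g := fun l _ => l ∘ Equiv.swap p (p+1))
  · intro l hl; rw [hg l hl]; ring
  · intro l hl hne hc
    have := hg l hl
    rw [hc] at this
    omega
  · intro l hl; exact comp_swap_mem_fnF hp hl
  · intro l hl
    funext j
    simp [Function.comp]



lemma comp_swap_eq_of_ne {k : ℕ → ℤ} {i j : ℕ} (h1 : j ≠ i) (h2 : j ≠ i+1) :
    (k ∘ Equiv.swap i (i+1)) j = k j := by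
  simp [Equiv.swap_apply_of_ne_of_ne h1 h2]

lemma Bnd_swap {k : ℕ → ℤ} {i n : ℕ} (hi : i + 1 < n) :
    Bnd (k ∘ Equiv.swap i (i+1)) n = Bnd k n := by
  unfold Bnd
  apply Finset.sum_nbij' (i := fun j => Equiv.swap i (i+1) j)
    (j := fun j => Equiv.swap i (i+1) j)
  · intro a ha; exact mem_range.2 (swap_lt hi (mem_range.1 ha))
  · intro a ha; exact mem_range.2 (swap_lt hi (mem_range.1 ha))
  · intro a _; simp
  · intro a _; simp
  · intro a _; simp

lemma W_add_eq (m : ℕ) (e₁ e₂ e₃ e₄ : ℕ → ℤ × ℤ) (T : Finset ℕ) (hT : T ⊆ range m)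
    (hoff : ∀ j ∈ range m, j ∉ T → e₂ j = e₁ j ∧ e₃ j = e₁ j ∧ e₄ j = e₁ j)
    (hon : ∀ l : ℕ → ℤ,
      (∏ j ∈ T, chi (e₁ j).1 (e₁ j).2 (l j)) + (∏ j ∈ T, chi (e₂ j).1 (e₂ j).2 (l j))
        = -(∏ j ∈ T, chi (e₃ j).1 (e₃ j).2 (l j)) - (∏ j ∈ T, chi (e₄ j).1 (e₄ j).2 (l j)))
    (l : ℕ → ℤ) : W e₁ m l + W e₂ m l = - W e₃ m l - W e₄ m l := by
  unfold W
  rw [← Finset.prod_sdiff hT (f := fun j => chi (e₁ j).1 (e₁ j).2 (l j)),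
      ← Finset.prod_sdiff hT (f := fun j => chi (e₂ j).1 (e₂ j).2 (l j)),
      ← Finset.prod_sdiff hT (f := fun j => chi (e₃ j).1 (e₃ j).2 (l j)),
      ← Finset.prod_sdiff hT (f := fun j => chi (e₄ j).1 (e₄ j).2 (l j))]
  have hc : ∀ (e : ℕ → ℤ × ℤ), (∀ j ∈ range m, j ∉ T → e j = e₁ j) →
      (∏ j ∈ range m \ T, chi (e j).1 (e j).2 (l j))
        = ∏ j ∈ range m \ T, chi (e₁ j).1 (e₁ j).2 (l j) := by
    intro e he
    apply Finset.prod_congr rfl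
    intro j hj
    rw [he j (Finset.mem_sdiff.1 hj).1 (Finset.mem_sdiff.1 hj).2]
  rw [hc e₂ (fun j h1 h2 => (hoff j h1 h2).1), hc e₃ (fun j h1 h2 => (hoff j h1 h2).2.1),
      hc e₄ (fun j h1 h2 => (hoff j h1 h2).2.2)]
  have := hon l
  set C := ∏ j ∈ range m \ T, chi (e₁ j).1 (e₁ j).2 (l j)
  linear_combination C * this

lemma W_add_eq2 (m : ℕ) (e₁ e₂ e₃ : ℕ → ℤ × ℤ) (T : Finset ℕ) (hT : T ⊆ range m)
    (hoff : ∀ j ∈ range m, j ∉ T → e₂ j = e₁ j ∧ e₃ j = e₁ j)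
    (hon : ∀ l : ℕ → ℤ,
      (∏ j ∈ T, chi (e₁ j).1 (e₁ j).2 (l j)) + (∏ j ∈ T, chi (e₂ j).1 (e₂ j).2 (l j))
        = -(∏ j ∈ T, chi (e₃ j).1 (e₃ j).2 (l j)))
    (l : ℕ → ℤ) : W e₁ m l + W e₂ m l = - W e₃ m l := by
  unfold W
  rw [← Finset.prod_sdiff hT (f := fun j => chi (e₁ j).1 (e₁ j).2 (l j)),
      ← Finset.prod_sdiff hT (f := fun j => chi (e₂ j).1 (e₂ j).2 (l j)),
      ← Finset.prod_sdiff hT (f := fun j => chi (e₃ j).1 (e₃ j).2 (l j))]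
  have hc : ∀ (e : ℕ → ℤ × ℤ), (∀ j ∈ range m, j ∉ T → e j = e₁ j) →
      (∏ j ∈ range m \ T, chi (e j).1 (e j).2 (l j))
        = ∏ j ∈ range m \ T, chi (e₁ j).1 (e₁ j).2 (l j) := by
    intro e he
    apply Finset.prod_congr rfl
    intro j hj
    rw [he j (Finset.mem_sdiff.1 hj).1 (Finset.mem_sdiff.1 hj).2]
  rw [hc e₂ (fun j h1 h2 => (hoff j h1 h2).1), hc e₃ (fun j h1 h2 => (hoff j h1 h2).2)]
  have := hon l
  set C := ∏ j ∈ range m \ T, chi (e₁ j).1 (e₁ j).2 (l j)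
  linear_combination C * this



lemma SC_cancel_step (m p : ℕ) (hp : p + 1 < m + 1) (S : Finset ℤ) (e : ℕ → ℤ × ℤ)
    (hsym : ∀ y y', chi (e p).1 (e p).2 y * chi (e (p+1)).1 (e (p+1)).2 y'
      = chi (e p).1 (e p).2 y' * chi (e (p+1)).1 (e (p+1)).2 y)
    (M : ℕ → Multiset ℤ)
    (hIH : ∀ l : ℕ → ℤ, SC (m+1) (l ∘ Equiv.swap p (p+1)) (Function.update M m 0)
        = - SC (m+1) l (Function.update M m 0)) :
    ∑ l ∈ fnF (m+1) S, W e (m+1) l *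
      (if M m = msOf (m+1) l then SC (m+1) l (Function.update M m 0) else 0) = 0 := by
  apply sum_cancel hp
  intro l _
  rw [W_comp_swap hp hsym, msOf_comp_swap hp, hIH l]
  split <;> ring

lemma SC_swap : ∀ n (k : ℕ → ℤ) (i : ℕ) (M : ℕ → Multiset ℤ), i + 1 < n →
    SC n (k ∘ Equiv.swap i (i+1)) M = - SC n k M := by
  intro n
  induction n using Nat.strong_induction_on with
  | _ n IH =>
  match n with
  | 0 => exact fun k i M h => absurd h (by omega)
  | 1 => exact fun k i M h => absurd h (by omega)
  | (m+2) =>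
    intro k i M hi
    have hBox : Box (k ∘ Equiv.swap i (i+1)) (m+2) = Box k (m+2) := by
      unfold Box; rw [Bnd_swap hi]
    rw [SC_succ_succ, SC_succ_succ, hBox]
    have key : ∑ l ∈ fnF (m+1) (Box k (m+2)),
        (W (ke (k ∘ Equiv.swap i (i+1))) (m+1) l + W (ke k) (m+1) l) *
          (if M m = msOf (m+1) l then SC (m+1) l (Function.update M m 0) else 0) = 0 := by
      rcases Nat.eq_zero_or_pos m with rfl | hm
      · -- m = 0, i = 0
        have hi0 : i = 0 := by omega
        subst hi0
        apply Finset.sum_eq_zero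
        intro l _
        have : W (ke (k ∘ Equiv.swap 0 1)) 1 l + W (ke k) 1 l = 0 := by
          unfold W ke
          rw [Finset.prod_range_one, Finset.prod_range_one]
          simp only [Function.comp_apply, Equiv.swap_apply_left, Equiv.swap_apply_right]
          simp [chi]
        rw [this, zero_mul]
      · -- m ≥ 1
        have hIH1 : ∀ (p : ℕ), p + 1 < m + 1 → ∀ l : ℕ → ℤ,
            SC (m+1) (l ∘ Equiv.swap p (p+1)) (Function.update M m 0)
              = - SC (m+1) l (Function.update M m 0) := by
          intro p hp l
          exact IH (m+1) (by omega) l p _ hp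
        rcases i with _ | p
        · -- i = 0, m ≥ 1 : two factors {0,1}
          have hT : ({0, 1} : Finset ℕ) ⊆ range (m+1) := by
            intro a ha; simp only [mem_insert, mem_singleton] at ha
            rcases ha with rfl | rfl <;> simp only [mem_range] <;> omega
          set e₃ : ℕ → ℤ × ℤ := fun j => if j ≤ 1 then (k 0, k 1) else ke k j with he₃
          have pw : ∀ l, W (ke k) (m+1) l + W (ke (k ∘ Equiv.swap 0 1)) (m+1) l
              = - W e₃ (m+1) l := by
            apply W_add_eq2 (m+1) (ke k) (ke (k ∘ Equiv.swap 0 1)) e₃ {0, 1} hT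
            · intro j hj hjT
              simp only [mem_insert, mem_singleton, not_or] at hjT
              constructor
              · unfold ke
                rw [comp_swap_eq_of_ne hjT.1 hjT.2,
                    comp_swap_eq_of_ne (by omega) (by omega)]
              · rw [he₃]; simp only
                rw [if_neg (by omega)]
            · intro l
              rw [Finset.prod_pair (by norm_num), Finset.prod_pair (by norm_num),
                  Finset.prod_pair (by norm_num)]
              unfold ke
              rw [he₃]
              simp only [Function.comp_apply, Equiv.swap_apply_left, Equiv.swap_apply_right,
                if_pos (by norm_num : (0:ℕ) ≤ 1), if_pos (le_refl 1)]
              have h2 : Equiv.swap 0 1 2 = 2 := Equiv.swap_apply_of_ne_of_ne (by omega) (by omega)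
              rw [h2]
              simp only [chi]; ring
          calc ∑ l ∈ fnF (m+1) (Box k (m+2)),
              (W (ke (k ∘ Equiv.swap 0 1)) (m+1) l + W (ke k) (m+1) l) *
                (if M m = msOf (m+1) l then SC (m+1) l (Function.update M m 0) else 0)
              = ∑ l ∈ fnF (m+1) (Box k (m+2)),
                  (- W e₃ (m+1) l) * (if M m = msOf (m+1) l then SC (m+1) l (Function.update M m 0) else 0) := by
                apply Finset.sum_congr rfl; intro l _
                rw [← pw l]; ring
            _ = - ∑ l ∈ fnF (m+1) (Box k (m+2)),
                  W e₃ (m+1) l * (if M m = msOf (m+1) l then SC (m+1) l (Function.update M m 0) else 0) := by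
                rw [← Finset.sum_neg_distrib]
                apply Finset.sum_congr rfl; intro l _; ring
            _ = 0 := by
                rw [SC_cancel_step m 0 (by omega) _ e₃ ?_ M (hIH1 0 (by omega))]
                · ring
                · intro y y'
                  rw [he₃]
                  simp only [if_pos (by norm_num : (0:ℕ) ≤ 1), if_pos (le_refl 1)]
                  ring
        · -- i = p+1
          have hσp : (k ∘ Equiv.swap (p+1) (p+1+1)) p = k p :=
            comp_swap_eq_of_ne (by omega) (by omega)
          have hσ1 : (k ∘ Equiv.swap (p+1) (p+1+1)) (p+1) = k (p+2) := by
            simp [Equiv.swap_apply_left]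
          have hσ2 : (k ∘ Equiv.swap (p+1) (p+1+1)) (p+1+1) = k (p+1) := by
            simp [Equiv.swap_apply_right]
          have hσ3 : (k ∘ Equiv.swap (p+1) (p+1+1)) (p+3) = k (p+3) :=
            comp_swap_eq_of_ne (by omega) (by omega)
          rcases eq_or_lt_of_le (show p + 2 ≤ m + 1 by omega) with hb | hint
          · -- boundary : p+2 = m+1
            have hT : ({p, p+1} : Finset ℕ) ⊆ range (m+1) := by
              intro a ha; simp only [mem_insert, mem_singleton] at ha
              rcases ha with rfl | rfl <;> simp only [mem_range] <;> omega
            set e₃ : ℕ → ℤ × ℤ := fun j =>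
              if j = p ∨ j = p+1 then (k (p+1), k (p+2)) else ke k j with he₃
            have E3p : e₃ p = (k (p+1), k (p+2)) := by simp [he₃]
            have E3q : e₃ (p+1) = (k (p+1), k (p+2)) := by simp [he₃]
            have pw : ∀ l, W (ke k) (m+1) l + W (ke (k ∘ Equiv.swap (p+1) (p+1+1))) (m+1) l
                = - W e₃ (m+1) l := by
              apply W_add_eq2 (m+1) (ke k) (ke (k ∘ Equiv.swap (p+1) (p+1+1))) e₃ {p, p+1} hT
              · intro j hj hjT
                simp only [mem_insert, mem_singleton, not_or] at hjT
                rw [mem_range] at hj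
                constructor
                · unfold ke
                  rw [comp_swap_eq_of_ne (by omega) (by omega),
                      comp_swap_eq_of_ne (by omega) (by omega)]
                · rw [he₃]; simp only
                  rw [if_neg (by omega)]
              · intro l
                rw [Finset.prod_pair (by omega), Finset.prod_pair (by omega),
                    Finset.prod_pair (by omega)]
                rw [E3p, E3q]
                unfold ke
                rw [hσp, hσ1, hσ2]
                simp only [chi]; ring
            calc ∑ l ∈ fnF (m+1) (Box k (m+2)),
                (W (ke (k ∘ Equiv.swap (p+1) (p+1+1))) (m+1) l + W (ke k) (m+1) l) *
                  (if M m = msOf (m+1) l then SC (m+1) l (Function.update M m 0) else 0)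
                = - ∑ l ∈ fnF (m+1) (Box k (m+2)),
                    W e₃ (m+1) l * (if M m = msOf (m+1) l then SC (m+1) l (Function.update M m 0) else 0) := by
                  rw [← Finset.sum_neg_distrib]
                  apply Finset.sum_congr rfl; intro l _
                  linear_combination (pw l) *
                    (if M m = msOf (m+1) l then SC (m+1) l (Function.update M m 0) else 0)
              _ = 0 := by
                  rw [SC_cancel_step m p (by omega) _ e₃ ?_ M (hIH1 p (by omega))]
                  · ring
                  · intro y y'
                    rw [E3p, E3q]; ring
          · -- interior : p+2 < m+1
            have hT : ({p, p+1, p+2} : Finset ℕ) ⊆ range (m+1) := by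
              intro a ha; simp only [mem_insert, mem_singleton] at ha
              rcases ha with rfl | rfl | rfl <;> simp only [mem_range] <;> omega
            set e₃ : ℕ → ℤ × ℤ := fun j =>
              if j = p then (k p, k (p+2)) else
              if j = p+1 ∨ j = p+2 then (k (p+1), k (p+2)) else ke k j with he₃
            set e₄ : ℕ → ℤ × ℤ := fun j =>
              if j = p ∨ j = p+1 then (k (p+1), k (p+2)) else
              if j = p+2 then (k (p+2), k (p+3)) else ke k j with he₄
            have E3p : e₃ p = (k p, k (p+2)) := by simp [he₃]
            have E3q : e₃ (p+1) = (k (p+1), k (p+2)) := by simp [he₃]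
            have E3r : e₃ (p+2) = (k (p+1), k (p+2)) := by simp [he₃]
            have E4p : e₄ p = (k (p+1), k (p+2)) := by simp [he₄]
            have E4q : e₄ (p+1) = (k (p+1), k (p+2)) := by simp [he₄]
            have E4r : e₄ (p+2) = (k (p+2), k (p+3)) := by simp [he₄]
            have hpne : (p ∉ ({p+1, p+2} : Finset ℕ)) := by
              simp only [mem_insert, mem_singleton]; omega
            have hqne : (p+1 ∉ ({p+2} : Finset ℕ)) := by
              simp only [mem_singleton]; omega
            have hexp : ∀ (f : ℕ → ℤ), ∏ j ∈ ({p, p+1, p+2} : Finset ℕ), f j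
                = f p * (f (p+1) * f (p+2)) := by
              intro f
              rw [Finset.prod_insert hpne, Finset.prod_pair (by omega)]
            have pw : ∀ l, W (ke k) (m+1) l + W (ke (k ∘ Equiv.swap (p+1) (p+1+1))) (m+1) l
                = - W e₃ (m+1) l - W e₄ (m+1) l := by
              apply W_add_eq (m+1) (ke k) (ke (k ∘ Equiv.swap (p+1) (p+1+1))) e₃ e₄
                {p, p+1, p+2} hT
              · intro j hj hjT
                simp only [mem_insert, mem_singleton, not_or] at hjT
                rw [mem_range] at hj
                refine ⟨?_, ?_, ?_⟩
                · unfold ke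
                  rw [comp_swap_eq_of_ne (by omega) (by omega),
                      comp_swap_eq_of_ne (by omega) (by omega)]
                · rw [he₃]; simp only
                  rw [if_neg (by omega), if_neg (by omega)]
                · rw [he₄]; simp only
                  rw [if_neg (by omega), if_neg (by omega)]
              · intro l
                rw [hexp, hexp, hexp, hexp]
                rw [E3p, E3q, E3r, E4p, E4q, E4r]
                unfold ke
                rw [hσp, hσ1, hσ2]
                rw [show p+2+1 = p+3 from rfl, hσ3]
                simp only [chi]; ring
            have c3 : ∑ l ∈ fnF (m+1) (Box k (m+2)),
                W e₃ (m+1) l * (if M m = msOf (m+1) l then SC (m+1) l (Function.update M m 0) else 0) = 0 := by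
              apply SC_cancel_step m (p+1) (by omega) _ e₃ ?_ M (hIH1 (p+1) (by omega))
              intro y y'
              rw [E3q, show (p+1+1) = p+2 from rfl, E3r]; ring
            have c4 : ∑ l ∈ fnF (m+1) (Box k (m+2)),
                W e₄ (m+1) l * (if M m = msOf (m+1) l then SC (m+1) l (Function.update M m 0) else 0) = 0 := by
              apply SC_cancel_step m p (by omega) _ e₄ ?_ M (hIH1 p (by omega))
              intro y y'
              rw [E4p, E4q]; ring
            calc ∑ l ∈ fnF (m+1) (Box k (m+2)),
                (W (ke (k ∘ Equiv.swap (p+1) (p+1+1))) (m+1) l + W (ke k) (m+1) l) *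
                  (if M m = msOf (m+1) l then SC (m+1) l (Function.update M m 0) else 0)
                = (- ∑ l ∈ fnF (m+1) (Box k (m+2)),
                    W e₃ (m+1) l * (if M m = msOf (m+1) l then SC (m+1) l (Function.update M m 0) else 0))
                  - ∑ l ∈ fnF (m+1) (Box k (m+2)),
                    W e₄ (m+1) l * (if M m = msOf (m+1) l then SC (m+1) l (Function.update M m 0) else 0) := by
                  rw [← Finset.sum_neg_distrib, ← Finset.sum_sub_distrib]
                  apply Finset.sum_congr rfl; intro l _
                  linear_combination (pw l) *
                    (if M m = msOf (m+1) l then SC (m+1) l (Function.update M m 0) else 0)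
              _ = 0 := by rw [c3, c4]; ring
      done
    have key2 : (∑ l ∈ fnF (m+1) (Box k (m+2)),
          W (ke (k ∘ Equiv.swap i (i+1))) (m+1) l *
            (if M m = msOf (m+1) l then SC (m+1) l (Function.update M m 0) else 0))
        + (∑ l ∈ fnF (m+1) (Box k (m+2)),
          W (ke k) (m+1) l *
            (if M m = msOf (m+1) l then SC (m+1) l (Function.update M m 0) else 0)) = 0 := by
      have hc : (∑ l ∈ fnF (m+1) (Box k (m+2)),
          W (ke (k ∘ Equiv.swap i (i+1))) (m+1) l *
            (if M m = msOf (m+1) l then SC (m+1) l (Function.update M m 0) else 0))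
        + (∑ l ∈ fnF (m+1) (Box k (m+2)),
          W (ke k) (m+1) l *
            (if M m = msOf (m+1) l then SC (m+1) l (Function.update M m 0) else 0))
        = ∑ l ∈ fnF (m+1) (Box k (m+2)),
        (W (ke (k ∘ Equiv.swap i (i+1))) (m+1) l + W (ke k) (m+1) l) *
          (if M m = msOf (m+1) l then SC (m+1) l (Function.update M m 0) else 0) := by
        rw [← Finset.sum_add_distrib]
        apply Finset.sum_congr rfl; intro l _; ring
      rw [hc, key]
    linarith [key2]


def Pfun (a b : ℕ → ℤ) (m i : ℕ) : ℤ :=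
  ∏ j ∈ range m, (if j+1 = i then a j else if j = i then b j else a j + b j)
def Dfun (a b : ℕ → ℤ) (m p : ℕ) : ℤ :=
  ∏ j ∈ range m, (if j = p then b j else if j = p+1 then a j else a j + b j)
def Cfun (a b : ℕ → ℤ) (m : ℕ) : ℤ := ∏ j ∈ range m, (a j + b j)

lemma Pfun_top (a b : ℕ → ℤ) (m : ℕ) : Pfun a b m (m+1) = Cfun a b m := by
  unfold Pfun Cfun
  apply Finset.prod_congr rfl
  intro j hj
  rw [mem_range] at hj
  rw [if_neg (by omega), if_neg (by omega)]

lemma Pfun_diag (a b : ℕ → ℤ) (m : ℕ) : Pfun a b (m+1) (m+1) = Cfun a b m * a m := by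
  unfold Pfun
  rw [Finset.prod_range_succ, if_pos rfl]
  rw [← Pfun_top a b m]
  rfl

lemma Dfun_diag (a b : ℕ → ℤ) (m : ℕ) : Dfun a b (m+1) m = Cfun a b m * b m := by
  unfold Dfun Cfun
  rw [Finset.prod_range_succ, if_pos rfl]
  congr 1
  apply Finset.prod_congr rfl
  intro j hj
  rw [mem_range] at hj
  rw [if_neg (by omega), if_neg (by omega)]

lemma prod_telescope (a b : ℕ → ℤ) : ∀ m : ℕ,
    ∑ i ∈ range (m+1), Pfun a b m i
      = Cfun a b m + ∑ p ∈ range (m-1), Dfun a b m p := by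
  intro m
  induction m with
  | zero => simp [Pfun, Cfun]
  | succ m ih =>
    rcases Nat.eq_zero_or_pos m with rfl | hm
    · simp [Finset.sum_range_succ, Pfun, Dfun, Cfun, Finset.prod_range_one]
      ring
    · obtain ⟨q, rfl⟩ : ∃ q, m = q + 1 := ⟨m - 1, by omega⟩
      -- h1 : partial sum
      have hPi : ∀ i ∈ range (q+1), Pfun a b ((q+1)+1) i = Pfun a b (q+1) i * (a (q+1) + b (q+1)) := by
        intro i hi
        rw [mem_range] at hi
        unfold Pfun
        rw [Finset.prod_range_succ, if_neg (by omega), if_neg (by omega)]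
      have hPm : Pfun a b ((q+1)+1) (q+1) = Pfun a b (q+1) (q+1) * b (q+1) := by
        unfold Pfun
        rw [Finset.prod_range_succ, if_neg (by omega), if_pos rfl]
      have h1 : ∑ i ∈ range ((q+1)+1), Pfun a b ((q+1)+1) i
          = (∑ i ∈ range ((q+1)+1), Pfun a b (q+1) i) * (a (q+1) + b (q+1))
            - Pfun a b (q+1) (q+1) * (a (q+1)) := by
        rw [Finset.sum_range_succ, Finset.sum_range_succ (f := fun i => Pfun a b (q+1) i)]
        rw [Finset.sum_congr rfl hPi, ← Finset.sum_mul]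
        rw [hPm]; ring
      have hDlow : ∀ p ∈ range q, Dfun a b ((q+1)+1) p = Dfun a b (q+1) p * (a (q+1) + b (q+1)) := by
        intro p hp
        rw [mem_range] at hp
        unfold Dfun
        rw [Finset.prod_range_succ, if_neg (by omega), if_neg (by omega)]
      -- assemble
      rw [Finset.sum_range_succ, h1, ih]
      have hPdiag2 : Pfun a b (q+1+1) (q+2) = Cfun a b (q+1) * a (q+1) :=
        Pfun_diag a b (q+1)
      rw [hPdiag2]
      have hrq : ((q+1) + 1 - 1) = (q+1) := by omega
      have hrq2 : ((q+1) - 1) = q := by omega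
      rw [hrq, hrq2]
      rw [Finset.sum_range_succ (f := fun p => Dfun a b ((q+1)+1) p)]
      rw [Finset.sum_congr rfl hDlow]
      have hPmm : Pfun a b (q+1) (q+1) = Cfun a b q * a q := Pfun_diag a b q
      have hCm : Cfun a b (q+1) = Cfun a b q * (a q + b q) := by
        unfold Cfun; rw [Finset.prod_range_succ]
      have hCm1 : Cfun a b ((q+1)+1) = Cfun a b (q+1) * (a (q+1) + b (q+1)) := by
        unfold Cfun; rw [Finset.prod_range_succ]
      have hDtop : Dfun a b ((q+1)+1) q = Cfun a b q * b q * a (q+1) := by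
        have step : Dfun a b ((q+1)+1) q = Dfun a b (q+1) q * a (q+1) := by
          unfold Dfun
          rw [Finset.prod_range_succ, if_neg (by omega), if_pos rfl]
        rw [step, Dfun_diag]
      rw [hDtop, hPmm, hCm1, hCm, ← Finset.sum_mul]
      ring

lemma SC_sup (n : ℕ) (k : ℕ → ℤ) (M : ℕ → Multiset ℤ) (S : Finset ℤ)
    (hS : Box k (n+2) ⊆ S) :
    SC (n+2) k M = ∑ l ∈ fnF (n+1) S,
      W (ke k) (n+1) l *
        (if M n = msOf (n+1) l then SC (n+1) l (Function.update M n 0) else 0) := by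
  rw [SC_succ_succ]
  apply sum_fnF_sup hS
  intro l _ hout
  rw [W_eq_zero (C := Bnd k (n+2)) ?_ ?_, zero_mul]
  · intro j hj
    exact pair_abs_le (k := k) (by omega)
  · obtain ⟨j, hj, hjS⟩ := hout
    exact ⟨j, hj, hjS⟩

lemma SC_rep (n : ℕ) (k : ℕ → ℤ) (x : ℤ) (M : ℕ → Multiset ℤ) (hn : 1 ≤ n) :
    SC n k M = ∑ i ∈ range n, SC n (rep k i x) M := by
  match n, hn with
  | 1, _ =>
    rw [Finset.sum_range_one]
    rfl
  | (m+2), _ =>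
    set B : ℤ := Bnd k (m+2) + (m+2) * |x| with hB
    have hB0 : Bnd k (m+2) ≤ B := by
      have : (0:ℤ) ≤ (m+2) * |x| := by positivity
      omega
    have hSBig : Box k (m+2) ⊆ Finset.Icc (-B) B := by
      unfold Box; apply Finset.Icc_subset_Icc <;> omega
    have hSBig' : ∀ i, Box (rep k i x) (m+2) ⊆ Finset.Icc (-B) B := by
      intro i
      unfold Box
      have hle : Bnd (rep k i x) (m+2) ≤ B := by
        rw [hB]
        unfold Bnd
        have : ∑ j ∈ range (m+2), |rep k i x j| ≤ ∑ j ∈ range (m+2), (|k j| + |x|) := by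
          apply Finset.sum_le_sum
          intro j _
          unfold rep
          split
          · have := abs_nonneg (k j); omega
          · have := abs_nonneg x; omega
        rw [Finset.sum_add_distrib] at this
        simp only [Finset.sum_const, Finset.card_range, nsmul_eq_mul] at this
        push_cast at this ⊢
        linarith
      apply Finset.Icc_subset_Icc <;> omega
    set rest : (ℕ → ℤ) → ℤ := fun l =>
      (if M m = msOf (m+1) l then SC (m+1) l (Function.update M m 0) else 0) with hrest
    set dp : ℕ → ℕ → ℤ × ℤ := fun p j =>
      if j = p then (x, k (p+1)) else if j = p+1 then (k (p+1), x) else ke k j with hdp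
    have pointwise : ∀ l : ℕ → ℤ,
        ∑ i ∈ range (m+2), W (ke (rep k i x)) (m+1) l
          = W (ke k) (m+1) l + ∑ p ∈ range m, W (dp p) (m+1) l := by
      intro l
      have ht := prod_telescope (fun j => chi (k j) x (l j))
        (fun j => chi x (k (j+1)) (l j)) (m+1)
      have hWP : ∀ i, W (ke (rep k i x)) (m+1) l
          = Pfun (fun j => chi (k j) x (l j)) (fun j => chi x (k (j+1)) (l j)) (m+1) i := by
        intro i
        unfold W Pfun
        apply Finset.prod_congr rfl
        intro j _
        unfold ke rep
        by_cases h1 : j + 1 = i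
        · rw [if_pos h1, if_neg (by omega), if_pos h1]
        · rw [if_neg h1]
          by_cases h2 : j = i
          · rw [if_pos h2, if_neg h1, if_pos h2]
          · rw [if_neg h2, if_neg h1, if_neg h2, ← chi_split]
      have hWC : W (ke k) (m+1) l
          = Cfun (fun j => chi (k j) x (l j)) (fun j => chi x (k (j+1)) (l j)) (m+1) := by
        unfold W Cfun
        apply Finset.prod_congr rfl
        intro j _
        rw [← chi_split]
        rfl
      have hWD : ∀ p, W (dp p) (m+1) l
          = Dfun (fun j => chi (k j) x (l j)) (fun j => chi x (k (j+1)) (l j)) (m+1) p := by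
        intro p
        unfold W Dfun
        apply Finset.prod_congr rfl
        intro j _
        simp only [hdp]
        by_cases h1 : j = p
        · subst h1; rw [if_pos rfl, if_pos rfl]
        · rw [if_neg h1, if_neg h1]
          by_cases h2 : j = p+1
          · subst h2; rw [if_pos rfl, if_pos rfl]
          · rw [if_neg h2, if_neg h2, ← chi_split]
            rfl
      rw [Finset.sum_congr rfl (fun i _ => hWP i), hWC,
          Finset.sum_congr rfl (fun p _ => hWD p)]
      have hr : (m + 1 - 1) = m := by omega
      rw [← hr]
      exact ht
    have cancel : ∀ p ∈ range m, ∑ l ∈ fnF (m+1) (Finset.Icc (-B) B),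
        W (dp p) (m+1) l * rest l = 0 := by
      intro p hp
      rw [mem_range] at hp
      apply SC_cancel_step m p (by omega) _ (dp p) ?_ M
        (fun l => SC_swap (m+1) l p (Function.update M m 0) (by omega))
      intro y y'
      simp only [hdp, eq_self_iff_true, if_true, if_neg (show ¬ (p+1 = p) by omega), chi]
      ring
    calc SC (m+2) k M
        = ∑ l ∈ fnF (m+1) (Finset.Icc (-B) B), W (ke k) (m+1) l * rest l :=
          SC_sup m k M _ hSBig
      _ = ∑ l ∈ fnF (m+1) (Finset.Icc (-B) B), W (ke k) (m+1) l * rest l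
          + ∑ p ∈ range m, ∑ l ∈ fnF (m+1) (Finset.Icc (-B) B),
              W (dp p) (m+1) l * rest l := by
          rw [Finset.sum_congr rfl cancel]
          simp
      _ = ∑ l ∈ fnF (m+1) (Finset.Icc (-B) B),
            (W (ke k) (m+1) l * rest l
              + ∑ p ∈ range m, W (dp p) (m+1) l * rest l) := by
          rw [Finset.sum_add_distrib]
          congr 1
          rw [Finset.sum_comm]
      _ = ∑ l ∈ fnF (m+1) (Finset.Icc (-B) B),
            (∑ i ∈ range (m+2), W (ke (rep k i x)) (m+1) l) * rest l := by
          apply Finset.sum_congr rfl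
          intro l _
          rw [pointwise l, add_mul, Finset.sum_mul]
      _ = ∑ i ∈ range (m+2), ∑ l ∈ fnF (m+1) (Finset.Icc (-B) B),
            W (ke (rep k i x)) (m+1) l * rest l := by
          rw [Finset.sum_comm]
          apply Finset.sum_congr rfl
          intro l _
          rw [Finset.sum_mul]
      _ = ∑ i ∈ range (m+2), SC (m+2) (rep k i x) M := by
          apply Finset.sum_congr rfl
          intro i _
          exact (SC_sup m (rep k i x) M _ (hSBig' i)).symm



lemma rowMS_eq_msOf (t : ℕ → ℕ → ℤ) (i : ℕ) : rowMS t i = msOf (i+1) (t i) := by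
  unfold rowMS msOf
  rw [Finset.range_val, ← Multiset.coe_range, Multiset.map_coe]
  congr 1
  rw [List.ofFn_eq_map]
  apply List.ext_getElem (by simp) (by simp)

def extT (k : ℕ → ℤ) (m : ℕ) (t' : ℕ → ℕ → ℤ) : ℕ → ℕ → ℤ :=
  fun i j => if i = m+1 then (if j < m+2 then k j else 0) else t' i j

lemma extT_ne {k : ℕ → ℤ} {m : ℕ} {t' : ℕ → ℕ → ℤ} {i j : ℕ} (h : i ≠ m+1) :
    extT k m t' i j = t' i j := by
  simp [extT, if_neg h]

lemma extT_bot {k : ℕ → ℤ} {m : ℕ} {t' : ℕ → ℕ → ℤ} {j : ℕ} (h : j < m+2) :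
    extT k m t' (m+1) j = k j := by
  simp [extT, h]

lemma gtSign_ext (k : ℕ → ℤ) (m : ℕ) (t' : ℕ → ℕ → ℤ) :
    gtSign (m+2) (extT k m t')
      = (∏ j ∈ range (m+1), isign (k j) (k (j+1)) (t' m j)) * gtSign (m+1) t' := by
  unfold gtSign
  have h1 : (m+2-1) = m+1 := rfl
  have h2 : (m+1-1) = m := rfl
  rw [h1, h2, Finset.prod_range_succ, mul_comm]
  congr 1
  · apply Finset.prod_congr rfl
    intro j hj
    rw [mem_range] at hj
    rw [extT_bot (by omega), extT_bot (by omega), extT_ne (by omega)]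
  · apply Finset.prod_congr rfl
    intro i hi
    rw [mem_range] at hi
    apply Finset.prod_congr rfl
    intro j _
    rw [extT_ne (by omega), extT_ne (by omega), extT_ne (by omega)]

lemma rowMS_ext (k : ℕ → ℤ) (m : ℕ) (t' : ℕ → ℕ → ℤ) {r : ℕ} (hr : r ≠ m+1) :
    rowMS (extT k m t') r = rowMS t' r := by
  rw [rowMS_eq_msOf, rowMS_eq_msOf]
  congr 1
  funext j
  exact extT_ne hr

lemma prof_ext_iff (k : ℕ → ℤ) (m : ℕ) (t' : ℕ → ℕ → ℤ) (M : ℕ → Multiset ℤ)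
    (hpm : prof (m+1) t' m = 0) :
    prof (m+2) (extT k m t') = M
      ↔ (M m = rowMS t' m ∧ prof (m+1) t' = Function.update M m 0) := by
  constructor
  · rintro rfl
    constructor
    · show prof (m+2) (extT k m t') m = _
      unfold prof
      rw [if_pos (by omega), rowMS_ext k m t' (by omega)]
    · funext r
      by_cases hrm : r = m
      · rw [hrm, Function.update_self, hpm]
      · rw [Function.update_of_ne hrm]
        unfold prof
        by_cases hr : r + 1 < m + 1
        · rw [if_pos hr, if_pos (by omega), rowMS_ext k m t' (by omega)]
        · rw [if_neg hr, if_neg (by omega)]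
  · rintro ⟨hMm, hup⟩
    funext r
    by_cases hrm : r = m
    · rw [hrm]
      unfold prof
      rw [if_pos (by omega), rowMS_ext k m t' (by omega), hMm]
    · have h1 : prof (m+1) t' r = M r := by rw [hup, Function.update_of_ne hrm]
      unfold prof at h1 ⊢
      by_cases hr : r + 1 < m + 1
      · rw [if_pos (by omega), rowMS_ext k m t' (by omega), ← h1, if_pos hr]
      · rw [if_neg (by omega), ← h1, if_neg hr]
        -- r ≥ m+1, r ≠ m: ¬ (r+1 < m+2)
        done



def truncT (m : ℕ) (t : ℕ → ℕ → ℤ) : ℕ → ℕ → ℤ := fun i j => if i < m+1 then t i j else 0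

lemma truncT_lt {m : ℕ} {t : ℕ → ℕ → ℤ} {i j : ℕ} (h : i < m+1) : truncT m t i j = t i j :=
  if_pos h

lemma truncT_ge {m : ℕ} {t : ℕ → ℕ → ℤ} {i j : ℕ} (h : ¬ i < m+1) : truncT m t i j = 0 :=
  if_neg h

lemma SC_spec : ∀ n, 1 ≤ n → ∀ k : ℕ → ℤ, ∃ s : Finset (ℕ → ℕ → ℤ),
    (∀ t, t ∈ s ↔ IsGT n k t) ∧
    (∀ M, SC n k M = ∑ t ∈ s.filter (fun t => prof n t = M), gtSign n t) := by
  intro n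
  induction n using Nat.strong_induction_on with
  | _ n IH =>
  match n with
  | 0 =>
    intro h
    omega
  | 1 =>
    intro _ k
    refine ⟨{fun i j => if i = 0 ∧ j = 0 then k 0 else 0}, ?_, ?_⟩
    · intro t
      rw [Finset.mem_singleton]
      constructor
      · rintro rfl
        refine ⟨?_, ?_, ?_⟩
        · intro j hj
          have hj0 : j = 0 := by omega
          subst hj0
          simp
        · intro i j h
          omega
        · intro i j h
          have hne : ¬ (i = 0 ∧ j = 0) := by omega
          simp only [if_neg hne]
      · intro ht
        funext i j
        by_cases h : i = 0 ∧ j = 0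
        · rw [if_pos h]
          obtain ⟨rfl, rfl⟩ := h
          exact ht.1 0 (by omega)
        · rw [if_neg h]
          exact ht.2.2 i j (by omega)
    · intro M
      have hSC : SC 1 k M = if M = fun _ => 0 then 1 else 0 := by rw [SC]
      have hprof : prof 1 (fun i j => if i = 0 ∧ j = 0 then k 0 else 0)
          = fun _ => (0 : Multiset ℤ) := by
        funext r; unfold prof; rw [if_neg (by omega)]
      have hsign : gtSign 1 (fun i j => if i = 0 ∧ j = 0 then k 0 else 0) = 1 := by
        unfold gtSign; simp
      rw [hSC, Finset.filter_singleton]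
      by_cases hM : M = fun _ => (0 : Multiset ℤ)
      · rw [if_pos hM, if_pos (by rw [hprof, hM]), Finset.sum_singleton, hsign]
      · rw [if_neg hM, if_neg (by rw [hprof]; exact fun hc => hM hc.symm), Finset.sum_empty]
  | (m+2) =>
    intro _ k
    have IH1 := IH (m+1) (by omega) (by omega)
    choose sf hmem hsum using IH1
    set valid := (fnF (m+1) (Box k (m+2))).filter
      (fun l => ∀ j, j < m+1 → between (k j) (k (j+1)) (l j)) with hvalid
    have hrow : ∀ l, l ∈ fnF (m+1) (Box k (m+2)) → ∀ t', IsGT (m+1) l t' → t' m = l := by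
      intro l hl t' hgt
      funext j
      by_cases hj : j < m+1
      · exact hgt.1 j hj
      · rw [(mem_fnF.1 hl).2 j (by omega)]
        exact hgt.2.2 m j (Or.inr (by omega))
    have hextrow : ∀ t', (extT k m t') m = t' m := by
      intro t'; funext j; exact extT_ne (by omega)
    have hIsGT_ext : ∀ l ∈ valid, ∀ t', IsGT (m+1) l t' → IsGT (m+2) k (extT k m t') := by
      intro l hl t' hgt
      rw [hvalid, Finset.mem_filter] at hl
      refine ⟨?_, ?_, ?_⟩
      · intro j hj
        exact extT_bot hj
      · intro i j hi hj
        by_cases him : i = m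
        · subst him
          rw [extT_bot (by omega), extT_bot (by omega), extT_ne (by omega)]
          have hr := hrow l hl.1 t' hgt
          rw [hr]
          exact hl.2 j (by omega)
        · rw [extT_ne (by omega), extT_ne (by omega), extT_ne (by omega)]
          exact hgt.2.1 i j (by omega) hj
      · intro i j h
        rcases h with h | h
        · rw [extT_ne (by omega)]
          exact hgt.2.2 i j (Or.inl (by omega))
        · by_cases him : i = m+1
          · subst him; unfold extT; rw [if_pos rfl, if_neg (by omega)]
          · rw [extT_ne him]; exact hgt.2.2 i j (Or.inr h)
    have hmem_s : ∀ t, t ∈ valid.biUnion (fun l => (sf l).image (extT k m))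
        ↔ IsGT (m+2) k t := by
      intro t
      rw [Finset.mem_biUnion]
      constructor
      · rintro ⟨l, hl, ht⟩
        rw [Finset.mem_image] at ht
        obtain ⟨t', ht', rfl⟩ := ht
        exact hIsGT_ext l hl t' ((hmem l t').1 ht')
      · intro hgt
        have hbot : ∀ j, j < m+2 → t (m+1) j = k j := hgt.1
        have hbet : ∀ j, j < m+1 → between (k j) (k (j+1)) (t m j) := by
          intro j hj
          have hb := hgt.2.1 m j (by omega) (by omega)
          rw [hbot j (by omega), hbot (j+1) (by omega)] at hb
          exact hb
        have htm : t m ∈ valid := by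
          rw [hvalid, Finset.mem_filter]
          refine ⟨mem_fnF.2 ⟨?_, ?_⟩, hbet⟩
          · intro j hj
            have h1 := abs_le_of_between (hbet j hj)
            have h2 := pair_abs_le (k := k) (n := m+2) (j := j) (by omega)
            unfold Box
            rw [Finset.mem_Icc]
            exact ⟨(abs_le.1 (h1.trans h2)).1, (abs_le.1 (h1.trans h2)).2⟩
          · intro j hj
            exact hgt.2.2 m j (Or.inr (by omega))
        refine ⟨t m, htm, ?_⟩
        rw [Finset.mem_image]
        refine ⟨truncT m t, ?_, ?_⟩
        · apply (hmem _ _).2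
          refine ⟨?_, ?_, ?_⟩
          · intro j hj
            exact truncT_lt (by omega)
          · intro i j hi hj
            rw [truncT_lt (by omega), truncT_lt (by omega), truncT_lt (by omega)]
            exact hgt.2.1 i j (by omega) hj
          · intro i j h
            rcases h with h | h
            · exact truncT_ge (by omega)
            · by_cases him : i < m+1
              · rw [truncT_lt him]
                exact hgt.2.2 i j (Or.inr h)
              · exact truncT_ge him
        · funext i j
          by_cases him : i = m+1
          · subst him
            by_cases hjm : j < m+2
            · rw [extT_bot hjm, hbot j hjm]
            · unfold extT
              rw [if_pos rfl, if_neg hjm]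
              exact (hgt.2.2 (m+1) j (Or.inr (by omega))).symm
          · rw [extT_ne him]
            by_cases hi : i < m+1
            · exact truncT_lt hi
            · rw [truncT_ge hi]
              exact (hgt.2.2 i j (Or.inl (by omega))).symm
    refine ⟨valid.biUnion (fun l => (sf l).image (extT k m)), hmem_s, ?_⟩
    intro M
    -- disjointness of filtered images
    have hdisj : ∀ (P : (ℕ → ℕ → ℤ) → Prop),
        (↑valid : Set (ℕ → ℤ)).PairwiseDisjoint
          (fun l => ((sf l).image (extT k m)).filter P) := by
      intro P l₁ h₁ l₂ h₂ hne
      simp only [Function.onFun]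
      rw [Finset.disjoint_left]
      intro t ht₁ ht₂
      rw [Finset.mem_filter, Finset.mem_image] at ht₁ ht₂
      obtain ⟨⟨t₁, ht₁', rfl⟩, _⟩ := ht₁
      obtain ⟨⟨t₂, ht₂', het⟩, _⟩ := ht₂
      apply hne
      have e₁ : t₁ m = l₁ := by
        have hl₁ : l₁ ∈ valid := h₁
        rw [hvalid, Finset.mem_filter] at hl₁
        exact hrow l₁ hl₁.1 t₁ ((hmem l₁ t₁).1 ht₁')
      have e₂ : t₂ m = l₂ := by
        have hl₂ : l₂ ∈ valid := h₂
        rw [hvalid, Finset.mem_filter] at hl₂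
        exact hrow l₂ hl₂.1 t₂ ((hmem l₂ t₂).1 ht₂')
      calc l₁ = t₁ m := e₁.symm
        _ = (extT k m t₁) m := (hextrow t₁).symm
        _ = (extT k m t₂) m := by rw [het]
        _ = t₂ m := hextrow t₂
        _ = l₂ := e₂
    rw [Finset.filter_biUnion, Finset.sum_biUnion (hdisj _)]
    -- LHS
    rw [SC_succ_succ]
    have hLfilter : ∑ l ∈ fnF (m+1) (Box k (m+2)),
        W (ke k) (m+1) l *
          (if M m = msOf (m+1) l then SC (m+1) l (Function.update M m 0) else 0)
        = ∑ l ∈ valid,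
        W (ke k) (m+1) l *
          (if M m = msOf (m+1) l then SC (m+1) l (Function.update M m 0) else 0) := by
      rw [hvalid]
      refine (Finset.sum_filter_of_ne ?_).symm
      intro l _ hne j hj
      by_contra hb
      apply hne
      have : chi (k j) (k (j+1)) (l j) = 0 := chi_eq_zero hb
      have hW : W (ke k) (m+1) l = 0 :=
        Finset.prod_eq_zero (Finset.mem_range.2 hj) this
      rw [hW, zero_mul]
    rw [hLfilter]
    apply Finset.sum_congr rfl
    intro l hl
    have hlv := hl
    rw [hvalid, Finset.mem_filter] at hlv
    -- RHS inner sum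
    have hinj : Set.InjOn (extT k m)
        ↑((sf l).filter (fun t' => prof (m+2) (extT k m t') = M)) := by
      intro t₁ ht₁ t₂ ht₂ het
      simp only [Finset.coe_filter, Set.mem_setOf_eq] at ht₁ ht₂
      have hg₁ := (hmem l t₁).1 ht₁.1
      have hg₂ := (hmem l t₂).1 ht₂.1
      funext i j
      by_cases him : i = m+1
      · subst him
        rw [hg₁.2.2 (m+1) j (Or.inl (by omega)), hg₂.2.2 (m+1) j (Or.inl (by omega))]
      · calc t₁ i j = extT k m t₁ i j := (extT_ne him).symm
          _ = extT k m t₂ i j := by rw [het]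
          _ = t₂ i j := extT_ne him
    rw [Finset.filter_image, Finset.sum_image (fun x hx y hy h => hinj (by simpa using hx) (by simpa using hy) h)]
    -- rewrite summand signs and filter condition
    have hcondrw : ∀ t' ∈ sf l, (prof (m+2) (extT k m t') = M)
        ↔ (M m = msOf (m+1) l ∧ prof (m+1) t' = Function.update M m 0) := by
      intro t' ht'
      have hg := (hmem l t').1 ht'
      have hpm : prof (m+1) t' m = 0 := by unfold prof; rw [if_neg (by omega)]
      rw [prof_ext_iff k m t' M hpm]
      rw [rowMS_eq_msOf, hrow l hlv.1 t' hg]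
    have hsignrw : ∀ t' ∈ sf l, gtSign (m+2) (extT k m t')
        = (∏ j ∈ range (m+1), isign (k j) (k (j+1)) (l j)) * gtSign (m+1) t' := by
      intro t' ht'
      rw [gtSign_ext, hrow l hlv.1 t' ((hmem l t').1 ht')]
    have hWl : W (ke k) (m+1) l = ∏ j ∈ range (m+1), isign (k j) (k (j+1)) (l j) := by
      unfold W ke
      apply Finset.prod_congr rfl
      intro j hj
      rw [mem_range] at hj
      exact chi_eq_isign (hlv.2 j hj)
    rw [hWl]
    by_cases hc : M m = msOf (m+1) l
    · rw [if_pos hc]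
      have hfrw : (sf l).filter (fun t' => prof (m+2) (extT k m t') = M)
          = (sf l).filter (fun t' => prof (m+1) t' = Function.update M m 0) := by
        apply Finset.filter_congr
        intro t' ht'
        rw [hcondrw t' ht']
        simp [hc]
      rw [hfrw]
      rw [Finset.sum_congr rfl (fun t' ht' => hsignrw t' (Finset.mem_filter.1 ht').1)]
      rw [← Finset.mul_sum, ← hsum l (Function.update M m 0)]
    · rw [if_neg hc]
      have hfrw : (sf l).filter (fun t' => prof (m+2) (extT k m t') = M) = ∅ := by
        apply Finset.filter_false_of_mem
        intro t' ht'
        rw [hcondrw t' ht']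
        tauto
      rw [hfrw, Finset.sum_empty, mul_zero]


end GTAux

section P8

lemma prod_pm {α : Type*} (s : Finset α) (f : α → ℤ) (h : ∀ i ∈ s, f i = 1 ∨ f i = -1) :
    (∏ i ∈ s, f i) = 1 ∨ (∏ i ∈ s, f i) = -1 := by
  induction s using Finset.cons_induction with
  | empty => left; simp
  | cons a s ha ih =>
    rw [Finset.prod_cons]
    rcases h a (Finset.mem_cons_self a s) with h1 | h1 <;>
      rcases ih (fun i hi => h i (Finset.mem_cons.2 (Or.inr hi))) with h2 | h2 <;>
      rw [h1, h2] <;> norm_num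

lemma gtSign_pm (n : ℕ) (t : ℕ → ℕ → ℤ) : gtSign n t = 1 ∨ gtSign n t = -1 := by
  unfold gtSign
  apply prod_pm
  intro i _
  apply prod_pm
  intro j _
  unfold isign
  split
  · left; rfl
  · right; rfl

lemma sum_sign_card (n : ℕ) (F : Finset (ℕ → ℕ → ℤ)) (c : ℕ → Multiset ℤ) :
    ∑ t ∈ F.filter (fun t => prof n t = c), gtSign n t
      = ((F.filter (fun t => prof n t = c ∧ gtSign n t = 1)).card : ℤ)
        - ((F.filter (fun t => prof n t = c ∧ gtSign n t = -1)).card : ℤ) := by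
  rw [← Finset.filter_filter, ← Finset.filter_filter]
  rw [← Finset.sum_filter_add_sum_filter_not (F.filter (fun t => prof n t = c))
    (fun t => gtSign n t = 1)]
  have h1 : ∑ t ∈ (F.filter (fun t => prof n t = c)).filter (fun t => gtSign n t = 1),
      gtSign n t
      = (((F.filter (fun t => prof n t = c)).filter (fun t => gtSign n t = 1)).card : ℤ) := by
    rw [Finset.sum_congr rfl (fun t ht => (Finset.mem_filter.1 ht).2)]
    simp
  have h2 : (F.filter (fun t => prof n t = c)).filter (fun t => ¬ gtSign n t = 1)
      = (F.filter (fun t => prof n t = c)).filter (fun t => gtSign n t = -1) := by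
    apply Finset.filter_congr
    intro t _
    rcases gtSign_pm n t with h | h <;> simp [h]
  have h3 : ∑ t ∈ (F.filter (fun t => prof n t = c)).filter (fun t => gtSign n t = -1),
      gtSign n t
      = -((((F.filter (fun t => prof n t = c)).filter (fun t => gtSign n t = -1)).card : ℤ)) := by
    rw [Finset.sum_congr rfl (fun t ht => (Finset.mem_filter.1 ht).2)]
    simp
  rw [h2, h1, h3]
  ring

def sumFiberEquiv {α β γ : Type*} (f : α → γ) (g : β → γ) (c : γ) :
    {z : α ⊕ β // Sum.elim f g z = c} ≃ ({a : α // f a = c} ⊕ {b : β // g b = c}) where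
  toFun z :=
    match z with
    | ⟨Sum.inl a, h⟩ => Sum.inl ⟨a, h⟩
    | ⟨Sum.inr b, h⟩ => Sum.inr ⟨b, h⟩
  invFun w :=
    match w with
    | Sum.inl a => ⟨Sum.inl a.val, a.prop⟩
    | Sum.inr b => ⟨Sum.inr b.val, b.prop⟩
  left_inv := by rintro ⟨(a | b), h⟩ <;> rfl
  right_inv := by rintro (a | b) <;> rfl

def pairSigmaEquiv {n : ℕ} {A : Type*} (Q : ℕ → A → Prop) :
    {p : ℕ × A // p.1 < n ∧ Q p.1 p.2} ≃ Σ i : Fin n, {t : A // Q i.1 t} where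
  toFun u := ⟨⟨u.val.1, u.prop.1⟩, ⟨u.val.2, u.prop.2⟩⟩
  invFun w := ⟨(w.1.1, w.2.val), w.1.2, w.2.prop⟩
  left_inv := by rintro ⟨⟨i, t⟩, h⟩; rfl
  right_inv := by rintro ⟨i, t⟩; rfl

end P8

/-- For each `k ∈ ℤⁿ` and `x ∈ ℤ` there is a sijection
`τ : GT(k₁,…,kₙ) ⇒ ⨆_{i=1}^{n} GT(k₁,…,kᵢ₋₁,x,kᵢ₊₁,…,kₙ)`, compatible with the
statistics `η_{row,1}, …, η_{row,n−1}` recording the multisets of entries of the top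
`n−1` rows. -/
theorem gt_tau (n : ℕ) (hn : 0 < n) (k : ℕ → ℤ) (x : ℤ) :
    ∃ e : (GTp n k ⊕
            {p : ℕ × (ℕ → ℕ → ℤ) // p.1 < n ∧ IsGT n (rep k p.1 x) p.2 ∧ gtSign n p.2 = -1}) ≃
          (GTm n k ⊕
            {p : ℕ × (ℕ → ℕ → ℤ) // p.1 < n ∧ IsGT n (rep k p.1 x) p.2 ∧ gtSign n p.2 = 1}),
      ∀ z, ∀ r, r + 1 < n →
        rowMS (Sum.elim Subtype.val (fun u => u.val.2) (e z)) r
          = rowMS (Sum.elim Subtype.val (fun u => u.val.2) z) r := by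
  classical
  choose S hSmem hSsum using SC_spec n hn
  have hcount : ∀ (w : ℕ → ℤ) (c : ℕ → Multiset ℤ), SC n w c
      = (((S w).filter (fun t => prof n t = c ∧ gtSign n t = 1)).card : ℤ)
        - (((S w).filter (fun t => prof n t = c ∧ gtSign n t = -1)).card : ℤ) := by
    intro w c
    rw [hSsum w c, sum_sign_card]
  have hkey : ∀ c : ℕ → Multiset ℤ,
      ((S k).filter (fun t => prof n t = c ∧ gtSign n t = 1)).card
        + ∑ i ∈ range n, ((S (rep k i x)).filter (fun t => prof n t = c ∧ gtSign n t = -1)).card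
      = ((S k).filter (fun t => prof n t = c ∧ gtSign n t = -1)).card
        + ∑ i ∈ range n, ((S (rep k i x)).filter (fun t => prof n t = c ∧ gtSign n t = 1)).card := by
    intro c
    have h1 := SC_rep n k x c hn
    rw [hcount k c, Finset.sum_congr rfl (fun i _ => hcount (rep k i x) c),
        Finset.sum_sub_distrib] at h1
    have h2 : (((S k).filter (fun t => prof n t = c ∧ gtSign n t = 1)).card : ℤ)
        + ∑ i ∈ range n, (((S (rep k i x)).filter (fun t => prof n t = c ∧ gtSign n t = -1)).card : ℤ)
        = (((S k).filter (fun t => prof n t = c ∧ gtSign n t = -1)).card : ℤ)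
        + ∑ i ∈ range n, (((S (rep k i x)).filter (fun t => prof n t = c ∧ gtSign n t = 1)).card : ℤ) := by
      linarith
    exact_mod_cast h2
  set f₁ : GTp n k → (ℕ → Multiset ℤ) := fun a => prof n a.val with hf₁
  set g₁ : {p : ℕ × (ℕ → ℕ → ℤ) // p.1 < n ∧ IsGT n (rep k p.1 x) p.2 ∧ gtSign n p.2 = -1}
      → (ℕ → Multiset ℤ) := fun u => prof n u.val.2 with hg₁
  set f₂ : GTm n k → (ℕ → Multiset ℤ) := fun a => prof n a.val with hf₂
  set g₂ : {p : ℕ × (ℕ → ℕ → ℤ) // p.1 < n ∧ IsGT n (rep k p.1 x) p.2 ∧ gtSign n p.2 = 1}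
      → (ℕ → Multiset ℤ) := fun u => prof n u.val.2 with hg₂
  have hfe : ∀ c : ℕ → Multiset ℤ,
      Nonempty ({z // Sum.elim f₁ g₁ z = c} ≃ {z // Sum.elim f₂ g₂ z = c}) := by
    intro c
    have eA : {a : GTp n k // f₁ a = c}
        ≃ {t // t ∈ (S k).filter (fun t => prof n t = c ∧ gtSign n t = 1)} :=
      (Equiv.subtypeSubtypeEquivSubtypeInter
        (fun t : ℕ → ℕ → ℤ => IsGT n k t ∧ gtSign n t = 1)
        (fun t => prof n t = c)).trans (Equiv.subtypeEquivRight (by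
        intro t
        rw [Finset.mem_filter, hSmem]
        tauto))
    have eA' : {a : GTm n k // f₂ a = c}
        ≃ {t // t ∈ (S k).filter (fun t => prof n t = c ∧ gtSign n t = -1)} :=
      (Equiv.subtypeSubtypeEquivSubtypeInter
        (fun t : ℕ → ℕ → ℤ => IsGT n k t ∧ gtSign n t = -1)
        (fun t => prof n t = c)).trans (Equiv.subtypeEquivRight (by
        intro t
        rw [Finset.mem_filter, hSmem]
        tauto))
    have eB : {u : {p : ℕ × (ℕ → ℕ → ℤ) // p.1 < n ∧ IsGT n (rep k p.1 x) p.2 ∧ gtSign n p.2 = -1} // g₁ u = c}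
        ≃ Σ i : Fin n, {t // t ∈ (S (rep k i.1 x)).filter (fun t => prof n t = c ∧ gtSign n t = -1)} :=
      (Equiv.subtypeSubtypeEquivSubtypeInter
        (fun p : ℕ × (ℕ → ℕ → ℤ) => p.1 < n ∧ IsGT n (rep k p.1 x) p.2 ∧ gtSign n p.2 = -1)
        (fun p => prof n p.2 = c)).trans
        ((Equiv.subtypeEquivRight (by
          intro p
          rw [Finset.mem_filter, hSmem]
          tauto)).trans
        (pairSigmaEquiv (fun i t =>
          t ∈ (S (rep k i x)).filter (fun t => prof n t = c ∧ gtSign n t = -1))))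
    have eB' : {u : {p : ℕ × (ℕ → ℕ → ℤ) // p.1 < n ∧ IsGT n (rep k p.1 x) p.2 ∧ gtSign n p.2 = 1} // g₂ u = c}
        ≃ Σ i : Fin n, {t // t ∈ (S (rep k i.1 x)).filter (fun t => prof n t = c ∧ gtSign n t = 1)} :=
      (Equiv.subtypeSubtypeEquivSubtypeInter
        (fun p : ℕ × (ℕ → ℕ → ℤ) => p.1 < n ∧ IsGT n (rep k p.1 x) p.2 ∧ gtSign n p.2 = 1)
        (fun p => prof n p.2 = c)).trans
        ((Equiv.subtypeEquivRight (by
          intro p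
          rw [Finset.mem_filter, hSmem]
          tauto)).trans
        (pairSigmaEquiv (fun i t =>
          t ∈ (S (rep k i x)).filter (fun t => prof n t = c ∧ gtSign n t = 1))))
    have eL := (sumFiberEquiv f₁ g₁ c).trans (Equiv.sumCongr eA eB)
    have eR := (sumFiberEquiv f₂ g₂ c).trans (Equiv.sumCongr eA' eB')
    haveI : Finite {z // Sum.elim f₁ g₁ z = c} := Finite.of_equiv _ eL.symm
    haveI : Finite {z // Sum.elim f₂ g₂ z = c} := Finite.of_equiv _ eR.symm
    apply Finite.card_eq.mp
    rw [Nat.card_congr eL, Nat.card_congr eR, Nat.card_sum, Nat.card_sum]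
    rw [Nat.card_eq_finsetCard, Nat.card_eq_finsetCard]
    rw [Nat.card_eq_fintype_card, Nat.card_eq_fintype_card, Fintype.card_sigma,
        Fintype.card_sigma]
    simp only [Fintype.card_coe]
    rw [Fin.sum_univ_eq_sum_range
          (fun i => ((S (rep k i x)).filter (fun t => prof n t = c ∧ gtSign n t = -1)).card) n,
        Fin.sum_univ_eq_sum_range
          (fun i => ((S (rep k i x)).filter (fun t => prof n t = c ∧ gtSign n t = 1)).card) n]
    exact hkey c
  refine ⟨Equiv.ofFiberEquiv (f := Sum.elim f₁ g₁) (g := Sum.elim f₂ g₂)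
    (fun c => (hfe c).some), ?_⟩
  intro z r hr
  have h := Equiv.ofFiberEquiv_map (f := Sum.elim f₁ g₁) (g := Sum.elim f₂ g₂)
    (fun c => (hfe c).some) z
  have hLz : ∀ z', Sum.elim f₁ g₁ z' = prof n (Sum.elim Subtype.val (fun u => u.val.2) z') := by
    rintro (a | u) <;> rfl
  have hRz : ∀ z', Sum.elim f₂ g₂ z' = prof n (Sum.elim Subtype.val (fun u => u.val.2) z') := by
    rintro (a | u) <;> rfl
  rw [hRz, hLz] at h
  have h2 := congrFun h r
  unfold prof at h2
  rw [if_pos hr, if_pos hr] at h2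
  exact h2
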